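/- For μ = 1, the consistency region of MSEIC is contained in that of AIC, which is contained in that of QAIC: if g_MSEIC(q,1) = 2 - (q-1)² > 0 and q ≥ 1 then g_AIC(q,1) = q(1 - log q) > 0, and if g_AIC(q,1) > 0 and q ≥ 1 then g_QAIC(q) = log q - q + 2 > 0. -/
import Mathlib


noncomputable def gAIC (q μ : ℝ) : ℝ := q * (1 - Real.log q) - 1 + 1 / μ
noncomputable def gQAIC (q : ℝ) : ℝ := Real.log q - q + 2
noncomputable def gMSEIC (q μ : ℝ) : ℝ := 2 - (q - 1) ^ 2 * μ

theorem stmt_6 :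
    (∀ q : ℝ, 1 ≤ q → 0 < gMSEIC q 1 → 0 < gAIC q 1) ∧
    (∀ q : ℝ, 1 ≤ q → 0 < gAIC q 1 → 0 < gQAIC q) := by
  have he : (2.7182818283 : ℝ) < Real.exp 1 := by
    have := Real.exp_one_gt_d9; linarith
  constructor
  · intro q hq hm
    simp only [gMSEIC, gAIC] at *
    have hqe : q < Real.exp 1 := by nlinarith
    have hlog : Real.log q < 1 := by
      have := Real.log_lt_log (by linarith) hqe
      simpa [Real.log_exp] using this
    have h0 : (0:ℝ) < q := by linarith
    nlinarith [mul_pos h0 (show (0:ℝ) < 1 - Real.log q by linarith)]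
  · intro q hq ha
    simp only [gAIC, gQAIC] at *
    have h0 : (0:ℝ) < q := by linarith
    have hlog : Real.log q < 1 := by nlinarith
    have hqe : q < Real.exp 1 := by
      have := Real.exp_log h0
      calc q = Real.exp (Real.log q) := this.symm
        _ < Real.exp 1 := Real.exp_lt_exp.mpr hlog
    -- tangent bound: log q ≥ 2 - e/q
    have htan : Real.log q ≥ 2 - Real.exp 1 / q := by
      have hx : (0:ℝ) < Real.exp 1 / q := div_pos (Real.exp_pos 1) h0
      have := Real.log_le_sub_one_of_pos hx
      have hlq : Real.log (Real.exp 1 / q) = 1 - Real.log q := by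
        rw [Real.log_div (ne_of_gt (Real.exp_pos 1)) (ne_of_gt h0), Real.log_exp]
      rw [hlq] at this
      linarith
    have heu : Real.exp 1 < 2.7182818286 := by
      have := Real.exp_one_lt_d9; linarith
    have key : 4 - Real.exp 1 / q - q > 0 := by
      rw [gt_iff_lt, ← sub_pos]
      have : (0:ℝ) < (4 * q - Real.exp 1 - q ^ 2) / q := by
        apply div_pos _ h0
        nlinarith
      rw [show 4 - Real.exp 1 / q - q - 0 = (4 * q - Real.exp 1 - q ^ 2) / q by
        field_simp; ring]
      exact this
    linarith
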